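/- The natural homomorphism from A = ⟨a,b,c | a² = b² = c² = 1⟩ to G_4^3 sending the generators a, b, c to the generators a, b, c of G_4^3 is injective; that is, A is (isomorphic to) the subgroup of G_4^3 generated by a, b, c. -/

import Mathlib

set_option linter.unreachableTactic false
set_option linter.unusedTactic false
set_option linter.unnecessarySeqFocus false

/-- The generators of the free group on four letters `a, b, c, d`. -/
def x : Fin 4 → FreeGroup (Fin 4) := FreeGroup.of

/-- The relators of the group `G_4^3`:
`a², b², c², d², (abcd)², (bcad)², (cabd)²`. -/
def rels43 : Set (FreeGroup (Fin 4)) :=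
  {x 0 ^ 2, x 1 ^ 2, x 2 ^ 2, x 3 ^ 2,
    (x 0 * x 1 * x 2 * x 3) ^ 2, (x 1 * x 2 * x 0 * x 3) ^ 2, (x 2 * x 0 * x 1 * x 3) ^ 2}

/-- The group `G_4^3`. -/
abbrev G43 : Type := PresentedGroup rels43

/-- The generator `a` of `G_4^3`. -/
def ga : G43 := PresentedGroup.of (rels := rels43) 0
/-- The generator `b` of `G_4^3`. -/
def gb : G43 := PresentedGroup.of (rels := rels43) 1
/-- The generator `c` of `G_4^3`. -/
def gc : G43 := PresentedGroup.of (rels := rels43) 2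
/-- The generator `d` of `G_4^3`. -/
def gd : G43 := PresentedGroup.of (rels := rels43) 3

/-- The relators `a², b², c²` of the free product `A = ℤ/2 * ℤ/2 * ℤ/2`. -/
def relsA : Set (FreeGroup (Fin 3)) :=
  {FreeGroup.of 0 ^ 2, FreeGroup.of 1 ^ 2, FreeGroup.of 2 ^ 2}

/-- The group `A = ⟨a,b,c | a² = b² = c² = 1⟩`. -/
abbrev A : Type := PresentedGroup relsA

/-! ### Auxiliary constructions

We realize `A` set-theoretically as `F × (ZMod 2 × ZMod 2)`-like data, where
`F` is a free group of rank 3 with basis corresponding to `u = abc`, `v = bca`,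
`w = cab` (a free basis of the kernel of `A → ℤ/2 × ℤ/2`, `a ↦ (1,0)`, `b ↦ (0,1)`,
`c ↦ (1,1)`, with coset transversal `1, a, b, c`).  We then define an action of
`G_4^3` on this set extending the left regular action of `A`, which yields
injectivity of `A → G_4^3`. -/

abbrev Fg := FreeGroup (Fin 3)
local notation "U" => (FreeGroup.of 0 : Fg)
local notation "V" => (FreeGroup.of 1 : Fg)
local notation "W" => (FreeGroup.of 2 : Fg)

/-- Conjugation by `a` on the kernel subgroup, in the free basis. -/
def κa : Fg →* Fg := FreeGroup.lift ![V, U, (U*W*V)⁻¹]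
/-- Conjugation by `b` on the kernel subgroup, in the free basis. -/
def κb : Fg →* Fg := FreeGroup.lift ![(V*U*W)⁻¹, W, V]
/-- Conjugation by `c` on the kernel subgroup, in the free basis. -/
def κc : Fg →* Fg := FreeGroup.lift ![W, (W*V*U)⁻¹, U]
/-- The automorphism inverting each basis element. -/
def ι3 : Fg →* Fg := FreeGroup.lift ![U⁻¹, V⁻¹, W⁻¹]

@[simp] lemma κa_U : κa U = V := by simp [κa]
@[simp] lemma κa_V : κa V = U := by simp [κa]
@[simp] lemma κa_W : κa W = (U*W*V)⁻¹ := by simp [κa]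
@[simp] lemma κb_U : κb U = (V*U*W)⁻¹ := by simp [κb]
@[simp] lemma κb_V : κb V = W := by simp [κb]
@[simp] lemma κb_W : κb W = V := by simp [κb]
@[simp] lemma κc_U : κc U = W := by simp [κc]
@[simp] lemma κc_V : κc V = (W*V*U)⁻¹ := by simp [κc]
@[simp] lemma κc_W : κc W = U := by simp [κc]
@[simp] lemma ι3_U : ι3 U = U⁻¹ := by simp [ι3]
@[simp] lemma ι3_V : ι3 V = V⁻¹ := by simp [ι3]
@[simp] lemma ι3_W : ι3 W = W⁻¹ := by simp [ι3]

@[simp] lemma κaκa : ∀ g, κa (κa g) = g := by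
  have h : κa.comp κa = MonoidHom.id Fg := by
    apply FreeGroup.ext_hom; intro i; fin_cases i <;> simp <;> group
  intro g; simpa using DFunLike.congr_fun h g

@[simp] lemma κbκb : ∀ g, κb (κb g) = g := by
  have h : κb.comp κb = MonoidHom.id Fg := by
    apply FreeGroup.ext_hom; intro i; fin_cases i <;> simp <;> group
  intro g; simpa using DFunLike.congr_fun h g

@[simp] lemma κcκc : ∀ g, κc (κc g) = g := by
  have h : κc.comp κc = MonoidHom.id Fg := by
    apply FreeGroup.ext_hom; intro i; fin_cases i <;> simp <;> group
  intro g; simpa using DFunLike.congr_fun h g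

@[simp] lemma ι3ι3 : ∀ g, ι3 (ι3 g) = g := by
  have h : ι3.comp ι3 = MonoidHom.id Fg := by
    apply FreeGroup.ext_hom; intro i; fin_cases i <;> simp
  intro g; simpa using DFunLike.congr_fun h g

lemma m1_invol : ∀ g, κa (κb (κc (ι3 (κa (κb (κc (ι3 g))))))) = g := by
  have h : (κa.comp (κb.comp (κc.comp ι3))).comp (κa.comp (κb.comp (κc.comp ι3)))
      = MonoidHom.id Fg := by
    apply FreeGroup.ext_hom; intro i
    fin_cases i <;> simp <;> group
  intro g; simpa using DFunLike.congr_fun h g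

lemma m2_invol : ∀ g, κb (κc (κa (ι3 (κb (κc (κa (ι3 g))))))) = g := by
  have h : (κb.comp (κc.comp (κa.comp ι3))).comp (κb.comp (κc.comp (κa.comp ι3)))
      = MonoidHom.id Fg := by
    apply FreeGroup.ext_hom; intro i
    fin_cases i <;> simp <;> group
  intro g; simpa using DFunLike.congr_fun h g

lemma m3_invol : ∀ g, κc (κa (κb (ι3 (κc (κa (κb (ι3 g))))))) = g := by
  have h : (κc.comp (κa.comp (κb.comp ι3))).comp (κc.comp (κa.comp (κb.comp ι3)))
      = MonoidHom.id Fg := by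
    apply FreeGroup.ext_hom; intro i
    fin_cases i <;> simp <;> group
  intro g; simpa using DFunLike.congr_fun h g

/-- The set on which `G_4^3` will act. -/
abbrev Zs := Fg × (Fin 2 × Fin 2)

def fA : Fin 2 → Fin 2 → Fg := ![![1, U], ![1, V⁻¹]]
def fB : Fin 2 → Fin 2 → Fg := ![![1, 1], ![W⁻¹, V]]
def fC : Fin 2 → Fin 2 → Fg := ![![1, U⁻¹], ![W, 1]]

/-- The action of the generator `a`. -/
def Pa : Equiv.Perm Zs where
  toFun z := (κa z.1 * fA z.2.1 z.2.2, (z.2.1 + 1, z.2.2))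
  invFun z := (κa z.1 * fA z.2.1 z.2.2, (z.2.1 + 1, z.2.2))
  left_inv := by
    rintro ⟨ξ, i, j⟩
    fin_cases i <;> fin_cases j <;> simp [fA] <;> group
  right_inv := by
    rintro ⟨ξ, i, j⟩
    fin_cases i <;> fin_cases j <;> simp [fA] <;> group

/-- The action of the generator `b`. -/
def Pb : Equiv.Perm Zs where
  toFun z := (κb z.1 * fB z.2.1 z.2.2, (z.2.1, z.2.2 + 1))
  invFun z := (κb z.1 * fB z.2.1 z.2.2, (z.2.1, z.2.2 + 1))
  left_inv := by
    rintro ⟨ξ, i, j⟩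
    fin_cases i <;> fin_cases j <;> simp [fB] <;> group
  right_inv := by
    rintro ⟨ξ, i, j⟩
    fin_cases i <;> fin_cases j <;> simp [fB] <;> group

/-- The action of the generator `c`. -/
def Pc : Equiv.Perm Zs where
  toFun z := (κc z.1 * fC z.2.1 z.2.2, (z.2.1 + 1, z.2.2 + 1))
  invFun z := (κc z.1 * fC z.2.1 z.2.2, (z.2.1 + 1, z.2.2 + 1))
  left_inv := by
    rintro ⟨ξ, i, j⟩
    fin_cases i <;> fin_cases j <;> simp [fC] <;> group
  right_inv := by
    rintro ⟨ξ, i, j⟩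
    fin_cases i <;> fin_cases j <;> simp [fC] <;> group

/-- The action of the generator `d`. -/
def Pd : Equiv.Perm Zs where
  toFun z := (ι3 z.1, z.2)
  invFun z := (ι3 z.1, z.2)
  left_inv := by rintro ⟨ξ, p⟩; simp
  right_inv := by rintro ⟨ξ, p⟩; simp

lemma relPa : Pa * Pa = 1 := Equiv.ext fun z => Pa.left_inv z
lemma relPb : Pb * Pb = 1 := Equiv.ext fun z => Pb.left_inv z
lemma relPc : Pc * Pc = 1 := Equiv.ext fun z => Pc.left_inv z
lemma relPd : Pd * Pd = 1 := Equiv.ext fun z => Pd.left_inv z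

lemma rel5 : Pa * Pb * Pc * Pd * (Pa * Pb * Pc * Pd) = 1 := by
  refine Equiv.ext fun z => ?_
  obtain ⟨ξ, i, j⟩ := z
  fin_cases i <;> fin_cases j <;>
    simp [Pa, Pb, Pc, Pd, fA, fB, fC, m1_invol] <;> group

lemma rel6 : Pb * Pc * Pa * Pd * (Pb * Pc * Pa * Pd) = 1 := by
  refine Equiv.ext fun z => ?_
  obtain ⟨ξ, i, j⟩ := z
  fin_cases i <;> fin_cases j <;>
    simp [Pa, Pb, Pc, Pd, fA, fB, fC, m2_invol] <;> group

lemma rel7 : Pc * Pa * Pb * Pd * (Pc * Pa * Pb * Pd) = 1 := by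
  refine Equiv.ext fun z => ?_
  obtain ⟨ξ, i, j⟩ := z
  fin_cases i <;> fin_cases j <;>
    simp [Pa, Pb, Pc, Pd, fA, fB, fC, m3_invol] <;> group

/-- The images of the four generators of `G_4^3` in `Perm Zs`. -/
def permf : Fin 4 → Equiv.Perm Zs := ![Pa, Pb, Pc, Pd]

lemma presented_relator_eq_one {α : Type*} {rels : Set (FreeGroup α)} {r : FreeGroup α}
    (h : r ∈ rels) : PresentedGroup.mk rels r = 1 :=
  (QuotientGroup.eq_one_iff r).mpr (Subgroup.subset_normalClosure h)

lemma hrels43 : ∀ r ∈ rels43, FreeGroup.lift permf r = 1 := by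
  intro r hr
  simp only [rels43, Set.mem_insert_iff, Set.mem_singleton_iff] at hr
  rcases hr with rfl | rfl | rfl | rfl | rfl | rfl | rfl
  · rw [map_pow, x, FreeGroup.lift_apply_of, pow_two]; exact relPa
  · rw [map_pow, x, FreeGroup.lift_apply_of, pow_two]; exact relPb
  · rw [map_pow, x, FreeGroup.lift_apply_of, pow_two]; exact relPc
  · rw [map_pow, x, FreeGroup.lift_apply_of, pow_two]; exact relPd
  · rw [map_pow, x, map_mul, map_mul, map_mul, FreeGroup.lift_apply_of, FreeGroup.lift_apply_of,
      FreeGroup.lift_apply_of, FreeGroup.lift_apply_of, pow_two]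
    exact rel5
  · rw [map_pow, x, map_mul, map_mul, map_mul, FreeGroup.lift_apply_of, FreeGroup.lift_apply_of,
      FreeGroup.lift_apply_of, FreeGroup.lift_apply_of, pow_two]
    exact rel6
  · rw [map_pow, x, map_mul, map_mul, map_mul, FreeGroup.lift_apply_of, FreeGroup.lift_apply_of,
      FreeGroup.lift_apply_of, FreeGroup.lift_apply_of, pow_two]
    exact rel7

/-- The action of `G_4^3` on `Zs`. -/
def θG : G43 →* Equiv.Perm Zs := PresentedGroup.toGroup hrels43

lemma mem_rels43 (i : Fin 4) : x i ^ 2 ∈ rels43 := by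
  fin_cases i <;> simp [rels43]

lemma g43_sq (i : Fin 4) :
    (PresentedGroup.of (rels := rels43) i) * PresentedGroup.of i = 1 := by
  have h := presented_relator_eq_one (mem_rels43 i)
  simpa [x, sq, map_pow, PresentedGroup.of] using h

lemma hrelsA43 : ∀ r ∈ relsA,
    FreeGroup.lift (fun i : Fin 3 => (PresentedGroup.of (rels := rels43) (Fin.castSucc i))) r
      = 1 := by
  intro r hr
  simp only [relsA, Set.mem_insert_iff, Set.mem_singleton_iff] at hr
  rcases hr with rfl | rfl | rfl <;>
    · simp [sq, map_pow]
      exact g43_sq _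

/-- The natural homomorphism `A →* G_4^3`. -/
def ψA : A →* G43 := PresentedGroup.toGroup hrelsA43

/-- The generators of `A`. -/
def ta : A := PresentedGroup.of 0
def tb : A := PresentedGroup.of 1
def tc : A := PresentedGroup.of 2

lemma mem_relsA (i : Fin 3) : FreeGroup.of i ^ 2 ∈ relsA := by
  fin_cases i <;> simp [relsA]

lemma a_sq (i : Fin 3) :
    (PresentedGroup.of (rels := relsA) i) * PresentedGroup.of i = 1 := by
  have h := presented_relator_eq_one (mem_relsA i)
  simpa [sq, map_pow, PresentedGroup.of] using h

@[simp] lemma ta2 : ta * ta = 1 := a_sq 0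
@[simp] lemma tb2 : tb * tb = 1 := a_sq 1
@[simp] lemma tc2 : tc * tc = 1 := a_sq 2
@[simp] lemma taa : ∀ y : A, ta * (ta * y) = y := fun y => by
  rw [← mul_assoc, ta2, one_mul]
@[simp] lemma tbb : ∀ y : A, tb * (tb * y) = y := fun y => by
  rw [← mul_assoc, tb2, one_mul]
@[simp] lemma tcc : ∀ y : A, tc * (tc * y) = y := fun y => by
  rw [← mul_assoc, tc2, one_mul]
@[simp] lemma ta_inv : ta⁻¹ = ta := inv_eq_of_mul_eq_one_right ta2
@[simp] lemma tb_inv : tb⁻¹ = tb := inv_eq_of_mul_eq_one_right tb2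
@[simp] lemma tc_inv : tc⁻¹ = tc := inv_eq_of_mul_eq_one_right tc2

/-- `F → A`, sending the basis to `abc`, `bca`, `cab`. -/
def χh : Fg →* A := FreeGroup.lift ![ta * (tb * tc), tb * (tc * ta), tc * (ta * tb)]

@[simp] lemma χh_U : χh U = ta * (tb * tc) := by simp [χh]
@[simp] lemma χh_V : χh V = tb * (tc * ta) := by simp [χh]
@[simp] lemma χh_W : χh W = tc * (ta * tb) := by simp [χh]

lemma χκa : ∀ g, χh (κa g) = ta * (χh g * ta) := by
  have h : χh.comp κa = ((MulAut.conj ta).toMonoidHom).comp χh := by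
    apply FreeGroup.ext_hom; intro i
    fin_cases i <;>
      simp [MulAut.conj_apply, mul_assoc]
  intro g
  have h2 := DFunLike.congr_fun h g
  simpa [MulAut.conj_apply, mul_assoc] using h2

lemma χκb : ∀ g, χh (κb g) = tb * (χh g * tb) := by
  have h : χh.comp κb = ((MulAut.conj tb).toMonoidHom).comp χh := by
    apply FreeGroup.ext_hom; intro i
    fin_cases i <;>
      simp [MulAut.conj_apply, mul_assoc]
  intro g
  have h2 := DFunLike.congr_fun h g
  simpa [MulAut.conj_apply, mul_assoc] using h2

lemma χκc : ∀ g, χh (κc g) = tc * (χh g * tc) := by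
  have h : χh.comp κc = ((MulAut.conj tc).toMonoidHom).comp χh := by
    apply FreeGroup.ext_hom; intro i
    fin_cases i <;>
      simp [MulAut.conj_apply, mul_assoc]
  intro g
  have h2 := DFunLike.congr_fun h g
  simpa [MulAut.conj_apply, mul_assoc] using h2

/-- The coset transversal. -/
def Tt : Fin 2 → Fin 2 → A := ![![1, tb], ![ta, tc]]

/-- The bijection-to-be from `Zs` to `A`. -/
def βf (z : Zs) : A := χh z.1 * Tt z.2.1 z.2.2

/-- The subgroup of elements of `A` acting through `G_4^3` compatibly with left
multiplication. -/
def Sgrp : Subgroup A where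
  carrier := {y | ∀ z : Zs, βf ((θG.comp ψA) y z) = y * βf z}
  one_mem' := by
    intro z
    simp [map_one]
  mul_mem' := by
    intro y₁ y₂ h₁ h₂ z
    simp only [map_mul, Equiv.Perm.mul_apply]
    rw [h₁, h₂, mul_assoc]
  inv_mem' := by
    intro y hy z
    have h := hy (((θG.comp ψA) y)⁻¹ z)
    rw [show ∀ (f : Equiv.Perm Zs) a, f (f⁻¹ a) = a from fun f a => f.apply_symm_apply a] at h
    rw [map_inv, eq_inv_mul_iff_mul_eq]
    exact h.symm

lemma θψ_of (i : Fin 3) :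
    (θG.comp ψA) (PresentedGroup.of (rels := relsA) i) = permf (Fin.castSucc i) := by
  simp [θG, ψA, PresentedGroup.toGroup.of]

lemma mem_a : PresentedGroup.of (rels := relsA) (0 : Fin 3) ∈ Sgrp := by
  have h0 : (θG.comp ψA) (PresentedGroup.of (rels := relsA) (0 : Fin 3)) = Pa := by
    rw [θψ_of]; rfl
  show ∀ z : Zs, βf ((θG.comp ψA) (PresentedGroup.of (rels := relsA) (0 : Fin 3)) z)
      = PresentedGroup.of (rels := relsA) (0 : Fin 3) * βf z
  rw [h0]
  rintro ⟨ξ, i, j⟩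
  show βf (Pa (ξ, i, j)) = ta * βf (ξ, i, j)
  fin_cases i <;> fin_cases j <;>
    simp [βf, Pa, fA, Tt, χκa, map_mul, map_inv, mul_inv_rev, mul_assoc]

lemma mem_b : PresentedGroup.of (rels := relsA) (1 : Fin 3) ∈ Sgrp := by
  have h0 : (θG.comp ψA) (PresentedGroup.of (rels := relsA) (1 : Fin 3)) = Pb := by
    rw [θψ_of]; rfl
  show ∀ z : Zs, βf ((θG.comp ψA) (PresentedGroup.of (rels := relsA) (1 : Fin 3)) z)
      = PresentedGroup.of (rels := relsA) (1 : Fin 3) * βf z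
  rw [h0]
  rintro ⟨ξ, i, j⟩
  show βf (Pb (ξ, i, j)) = tb * βf (ξ, i, j)
  fin_cases i <;> fin_cases j <;>
    simp [βf, Pb, fB, Tt, χκb, map_mul, map_inv, mul_inv_rev, mul_assoc]

lemma mem_c : PresentedGroup.of (rels := relsA) (2 : Fin 3) ∈ Sgrp := by
  have h0 : (θG.comp ψA) (PresentedGroup.of (rels := relsA) (2 : Fin 3)) = Pc := by
    rw [θψ_of]; rfl
  show ∀ z : Zs, βf ((θG.comp ψA) (PresentedGroup.of (rels := relsA) (2 : Fin 3)) z)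
      = PresentedGroup.of (rels := relsA) (2 : Fin 3) * βf z
  rw [h0]
  rintro ⟨ξ, i, j⟩
  show βf (Pc (ξ, i, j)) = tc * βf (ξ, i, j)
  fin_cases i <;> fin_cases j <;>
    simp [βf, Pc, fC, Tt, χκc, map_mul, map_inv, mul_inv_rev, mul_assoc]

lemma key : ∀ y : A, ∀ z : Zs, βf ((θG.comp ψA) y z) = y * βf z := by
  have hgen : ∀ j : Fin 3, PresentedGroup.of (rels := relsA) j ∈ Sgrp := by
    intro j
    fin_cases j
    · exact mem_a
    · exact mem_b
    · exact mem_c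
  intro y
  exact PresentedGroup.generated_by relsA Sgrp hgen y

/-- The natural homomorphism from `A = ⟨a,b,c | a² = b² = c² = 1⟩` to `G_4^3`
sending the generators `a, b, c` to the generators `a, b, c` of `G_4^3` is injective;
that is, `A` is (isomorphic to) the subgroup of `G_4^3` generated by `a, b, c`. -/
theorem stmt_18 : ∃ ψ : A →* G43,
    (∀ i : Fin 3, ψ (PresentedGroup.of (rels := relsA) i) =
      PresentedGroup.of (rels := rels43) (Fin.castSucc i)) ∧
    Function.Injective ψ := by
  refine ⟨ψA, fun i => PresentedGroup.toGroup.of _, ?_⟩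
  intro y₁ y₂ h
  have h₁ := key y₁ ((1 : Fg), ((0 : Fin 2), (0 : Fin 2)))
  have h₂ := key y₂ ((1 : Fg), ((0 : Fin 2), (0 : Fin 2)))
  have e : (θG.comp ψA) y₁ ((1 : Fg), ((0 : Fin 2), (0 : Fin 2)))
      = (θG.comp ψA) y₂ ((1 : Fg), ((0 : Fin 2), (0 : Fin 2))) := by
    simp only [MonoidHom.comp_apply, h]
  rw [e, h₂] at h₁
  have h3 : y₂ = y₁ := by simpa [βf, Tt] using h₁
  exact h3.symm
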